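/- The inverse reduction red_{t_0}^{-1} applied to a symplectic column (a_1,...,a_{t_0}) with target length l (where l - t_0 - Σ l_i =: l_{t_0+1} ≥ 0 is even) produces a strictly increasing sequence of length l with entries in [1, max(a_{t_0}+1+l_{t_0+1}, l_1)]: the concatenation T_0 T_1 ... T_{t_0} with T_0 = (1,...,l_1), T_i = (a_i, a_i+1, ..., a_i+l_{i+1}) if a_i even and T_i = (a_i, a_i+2, a_i+3, ..., a_i+1+l_{i+1}) if a_i odd, is strictly increasing. -/

import Mathlib

open Classical in
/-- The inverse reduction `red_{t_0}^{-1}` applied to a symplectic column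
`(a_1, …, a_{t_0})` with target length `l` produces a strictly increasing
sequence of length `l` with entries in `[1, max (a_{t_0} + 1 + l_{t_0+1}) l_1]`:
the concatenation `T_0 T_1 ⋯ T_{t_0}` is strictly increasing. -/
theorem stmt14 (t0 l : ℕ) (ht0 : 1 ≤ t0) (a g : ℕ → ℤ)
    (hsymp : ∀ i : ℕ, 1 ≤ i → i ≤ t0 → 2 * (i : ℤ) - 1 ≤ a i)
    (hinc : ∀ i : ℕ, 1 ≤ i → i < t0 → a i < a (i + 1))
    (hg1 : g 1 = if Even (a 1) then a 1 - 2 else a 1 - 1)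
    (hgi : ∀ i : ℕ, 1 ≤ i → i < t0 →
      g (i + 1) =
        if Even (a i) ↔ Even (a (i + 1)) then a (i + 1) - a i - 2
        else if Even (a i) ∧ ¬Even (a (i + 1)) then a (i + 1) - a i - 1
        else if 3 ≤ a (i + 1) - a i then a (i + 1) - a i - 3
        else 0)
    (hglast : g (t0 + 1) = (l : ℤ) - t0 - ∑ i ∈ Finset.Icc 1 t0, g i)
    (hlastnn : 0 ≤ g (t0 + 1)) (hlasteven : Even (g (t0 + 1)))
    (T : ℕ → List ℤ)
    (hT0 : T 0 = (List.range (g 1).toNat).map (fun j => (j : ℤ) + 1))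
    (hTi : ∀ i : ℕ, 1 ≤ i → i ≤ t0 →
      T i =
        if Even (a i) then (List.range ((g (i + 1)).toNat + 1)).map (fun j => a i + j)
        else a i :: (List.range (g (i + 1)).toNat).map (fun j => a i + 2 + j))
    (L : List ℤ) (hL : L = ((List.range (t0 + 1)).map T).flatten) :
    List.Chain' (· < ·) L ∧ L.length = l ∧
      ∀ x ∈ L, 1 ≤ x ∧ x ≤ max (a t0 + 1 + g (t0 + 1)) (g 1) := by
  have hcoe : ∀ n : ℕ, (do let a ← List.range n; pure ((a : ℤ)))
      = (List.range n).map (fun a : ℕ => (a : ℤ)) := by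
    intro n
    induction n with
    | zero => rfl
    | succ m ih => rw [List.range_succ]; simp_all
  have hT0' : T 0 = (List.range (g 1).toNat).map (fun j : ℕ => (j : ℤ) + 1) := by
    rw [hT0, hcoe, List.map_map]; rfl
  have hTi' : ∀ i : ℕ, 1 ≤ i → i ≤ t0 →
      T i = if Even (a i) then (List.range ((g (i + 1)).toNat + 1)).map (fun j : ℕ => a i + (j : ℤ))
        else a i :: (List.range ((g (i + 1)).toNat)).map (fun j : ℕ => a i + 2 + (j : ℤ)) := by
    intro i h1 h2
    rw [hTi i h1 h2]
    split_ifs <;> rw [hcoe, List.map_map] <;> rfl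
  have mapchain : ∀ (c : ℤ) (n : ℕ),
      List.Chain' (· < ·) ((List.range n).map (fun j : ℕ => c + (j : ℤ))) := by
    intro c n
    refine List.Pairwise.isChain ?_
    refine (List.pairwise_lt_range (n := n)).map _ ?_
    intro x y h
    have : (x : ℤ) < (y : ℤ) := by exact_mod_cast h
    linarith
  have ha1 : (1 : ℤ) ≤ a 1 := by have := hsymp 1 le_rfl ht0; push_cast at this; linarith
  have hgen : ∀ i : ℕ, 1 ≤ i → i ≤ t0 → (1 : ℤ) ≤ a i := by
    intro i hi hit
    have := hsymp i hi hit
    have : (1 : ℤ) ≤ (i : ℤ) := by exact_mod_cast hi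
    nlinarith [hsymp i hi hit]
  have hg1nn : 0 ≤ g 1 := by
    rw [hg1]; split_ifs with h
    · rw [Int.even_iff] at h; omega
    · linarith
  have hg1lt : g 1 < a 1 := by rw [hg1]; split_ifs <;> linarith
  -- nonnegativity of g (i+1) for 1 ≤ i ≤ t0
  have hgnn : ∀ i : ℕ, 1 ≤ i → i ≤ t0 → 0 ≤ g (i + 1) := by
    intro i hi hit
    rcases eq_or_lt_of_le hit with heq | hlt
    · rw [heq]; exact hlastnn
    · rw [hgi i hi hlt]
      have hainc := hinc i hi hlt
      split_ifs with h1 h2 h3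
      · rw [Int.even_iff, Int.even_iff] at h1; omega
      · linarith
      · linarith
      · exact le_rfl
  -- key strict inequalities for the join conditions
  have hF1 : ∀ i : ℕ, 1 ≤ i → i < t0 → a i + g (i + 1) < a (i + 1) := by
    intro i hi hlt
    have hainc := hinc i hi hlt
    rw [hgi i hi hlt]
    split_ifs with h1 h2 h3 <;> omega
  have hF2 : ∀ i : ℕ, 1 ≤ i → i < t0 → ¬Even (a i) → 0 < g (i + 1) →
      a i + 1 + g (i + 1) < a (i + 1) := by
    intro i hi hlt hodd hpos
    have hainc := hinc i hi hlt
    rw [hgi i hi hlt] at hpos ⊢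
    rw [Int.even_iff] at hodd
    by_cases h1 : Even (a i) ↔ Even (a (i + 1))
    · rw [if_pos h1] at hpos ⊢
      rw [Int.even_iff, Int.even_iff] at h1
      omega
    · rw [if_neg h1] at hpos ⊢
      have h2 : ¬(Even (a i) ∧ ¬Even (a (i + 1))) := by
        rintro ⟨he, -⟩; rw [Int.even_iff] at he; omega
      rw [if_neg h2] at hpos ⊢
      split_ifs with h3 <;> omega
  -- facts about T 0
  have hT0chain : List.Chain' (· < ·) (T 0) := by
    rw [hT0']
    have := mapchain 1 (g 1).toNat
    convert this using 2 with j
    ring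
  have hT0len : (T 0).length = (g 1).toNat := by rw [hT0']; simp
  have hT0mem : ∀ x ∈ T 0, 1 ≤ x ∧ x ≤ g 1 := by
    intro x hx
    rw [hT0'] at hx
    simp only [List.mem_map, List.mem_range] at hx
    obtain ⟨j, hj, rfl⟩ := hx
    have hj' : (j : ℤ) < g 1 := by
      have : (j : ℤ) < ((g 1).toNat : ℤ) := by exact_mod_cast hj
      rwa [Int.toNat_of_nonneg hg1nn] at this
    constructor
    · omega
    · linarith
  -- facts about each block T i, 1 ≤ i ≤ t0
  have hblock : ∀ i : ℕ, 1 ≤ i → i ≤ t0 →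
      List.Chain' (· < ·) (T i) ∧ (T i).length = (g (i + 1)).toNat + 1 ∧
      (T i).head? = some (a i) ∧
      (∀ x ∈ T i, a i ≤ x ∧ x ≤ a i + 1 + g (i + 1)) ∧
      (i < t0 → ∀ x ∈ T i, x < a (i + 1)) := by
    intro i hi hit
    have hnn : 0 ≤ g (i + 1) := hgnn i hi hit
    have hcast : ((g (i + 1)).toNat : ℤ) = g (i + 1) := Int.toNat_of_nonneg hnn
    rw [hTi' i hi hit]
    by_cases hev : Even (a i)
    · rw [if_pos hev]
      refine ⟨mapchain _ _, by simp, ?_, ?_, ?_⟩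
      · rw [List.range_succ_eq_map]; simp
      · intro x hx
        simp only [List.mem_map, List.mem_range] at hx
        obtain ⟨j, hj, rfl⟩ := hx
        have hj' : (j : ℤ) ≤ g (i + 1) := by
          have : (j : ℤ) < ((g (i + 1)).toNat : ℤ) + 1 := by exact_mod_cast hj
          omega
        have hj0 : (0 : ℤ) ≤ (j : ℤ) := Int.natCast_nonneg j
        constructor
        · linarith
        · linarith
      · intro hlt x hx
        have h1 := hF1 i hi hlt
        simp only [List.mem_map, List.mem_range] at hx
        obtain ⟨j, hj, rfl⟩ := hx
        have hj' : (j : ℤ) ≤ g (i + 1) := by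
          have : (j : ℤ) < ((g (i + 1)).toNat : ℤ) + 1 := by exact_mod_cast hj
          omega
        linarith
    · rw [if_neg hev]
      have hmem : ∀ x ∈ (List.range (g (i + 1)).toNat).map (fun j : ℕ => a i + 2 + j),
          a i + 2 ≤ x ∧ x ≤ a i + 1 + g (i + 1) ∧ 0 < g (i + 1) := by
        intro x hx
        simp only [List.mem_map, List.mem_range] at hx
        obtain ⟨j, hj, rfl⟩ := hx
        have hj' : (j : ℤ) < g (i + 1) := by
          have : (j : ℤ) < ((g (i + 1)).toNat : ℤ) := by exact_mod_cast hj
          omega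
        have : (0 : ℤ) ≤ (j : ℤ) := Int.natCast_nonneg j
        refine ⟨by linarith, by linarith, by linarith⟩
      refine ⟨?_, by simp [add_comm], rfl, ?_, ?_⟩
      · unfold List.Chain'; rw [List.isChain_cons]
        constructor
        · intro y hy
          have := hmem y (List.mem_of_mem_head? hy)
          linarith [this.1]
        · exact mapchain _ _
      · intro x hx
        rcases List.mem_cons.mp hx with rfl | hx
        · exact ⟨le_refl _, by linarith⟩
        · have := hmem x hx
          exact ⟨by linarith [this.1], this.2.1⟩
      · intro hlt x hx
        rcases List.mem_cons.mp hx with rfl | hx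
        · exact hinc i hi hlt
        · have h := hmem x hx
          have := hF2 i hi hlt hev h.2.2
          linarith [h.2.1]
  -- main induction on the partial concatenations
  have main : ∀ k : ℕ, 1 ≤ k → k ≤ t0 →
      List.Chain' (· < ·) (((List.range (k + 1)).map T).flatten) ∧
      (((List.range (k + 1)).map T).flatten).length
        = (g 1).toNat + ∑ i ∈ Finset.range k, ((g (i + 2)).toNat + 1) ∧
      (∀ x ∈ ((List.range (k + 1)).map T).flatten,
        1 ≤ x ∧ x ≤ a k + 1 + g (k + 1) ∧ (k < t0 → x < a (k + 1))) := by
    intro k hk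
    induction k, hk using Nat.le_induction with
    | base =>
      intro h1t
      obtain ⟨hc1, hl1, hh1, hm1, hs1⟩ := hblock 1 le_rfl ht0
      have hsplit : ((List.range 2).map T).flatten = T 0 ++ T 1 := by
        simp [List.range_succ]
      rw [hsplit]
      have hg2nn : 0 ≤ g 2 := hgnn 1 le_rfl ht0
      refine ⟨?_, ?_, ?_⟩
      · unfold List.Chain'; rw [List.isChain_append]
        refine ⟨hT0chain, hc1, ?_⟩
        intro x hx y hy
        have hx' := hT0mem x (List.mem_of_mem_getLast? hx)
        obtain rfl : a 1 = y := by rw [hh1] at hy; simpa using hy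
        linarith [hx'.2]
      · rw [List.length_append, hT0len, hl1]; simp
      · intro x hx
        rcases List.mem_append.mp hx with hx | hx
        · have := hT0mem x hx
          refine ⟨this.1, by linarith [this.2], fun hlt => ?_⟩
          have := hinc 1 le_rfl hlt
          linarith [hT0mem x hx |>.2]
        · have h := hm1 x hx
          exact ⟨by linarith [h.1], h.2, fun hlt => hs1 hlt x hx⟩
    | succ k hk ih =>
      intro hk1t
      have hkt : k < t0 := hk1t
      obtain ⟨ihc, ihl, ihm⟩ := ih hkt.le
      obtain ⟨hck, hlk, hhk, hmk, hsk⟩ := hblock (k + 1) (by omega) hk1t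
      have hsplit : ((List.range (k + 2)).map T).flatten
          = ((List.range (k + 1)).map T).flatten ++ T (k + 1) := by
        rw [show k + 2 = (k + 1) + 1 from rfl, List.range_succ]
        simp
      rw [hsplit]
      have hgnn2 : 0 ≤ g (k + 2) := hgnn (k + 1) (by omega) hk1t
      have ha1k : (1 : ℤ) ≤ a (k + 1) := hgen (k + 1) (by omega) hk1t
      refine ⟨?_, ?_, ?_⟩
      · unfold List.Chain'; rw [List.isChain_append]
        refine ⟨ihc, hck, ?_⟩
        intro x hx y hy
        have hx' := ihm x (List.mem_of_mem_getLast? hx)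
        obtain rfl : a (k + 1) = y := by rw [hhk] at hy; simpa using hy
        exact hx'.2.2 hkt
      · rw [List.length_append, ihl, hlk, Finset.sum_range_succ]; ring
      · intro x hx
        rcases List.mem_append.mp hx with hx | hx
        · have h := ihm x hx
          have hxlt : x < a (k + 1) := h.2.2 hkt
          refine ⟨h.1, by linarith, fun hlt => ?_⟩
          have := hinc (k + 1) (by omega) hlt
          linarith
        · have h := hmk x hx
          exact ⟨by linarith [h.1], h.2, fun hlt => hsk hlt x hx⟩
  obtain ⟨hc, hlen, hmem⟩ := main t0 ht0 le_rfl
  rw [← hL] at hc hlen hmem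
  refine ⟨hc, ?_, ?_⟩
  · -- length computation
    have hsum : ∑ i ∈ Finset.Icc 1 t0, g i = ∑ i ∈ Finset.range t0, g (i + 1) := by
      rw [← Finset.Ico_add_one_right_eq_Icc, Finset.sum_Ico_eq_sum_range]
      simp [add_comm]
    have hshift : g 1 + ∑ i ∈ Finset.range t0, g (i + 2)
        = (∑ i ∈ Finset.range t0, g (i + 1)) + g (t0 + 1) := by
      have h1 : ∑ i ∈ Finset.range (t0 + 1), g (i + 1)
          = (∑ i ∈ Finset.range t0, g (i + 1)) + g (t0 + 1) := Finset.sum_range_succ _ _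
      have h2 : ∑ i ∈ Finset.range (t0 + 1), g (i + 1)
          = g 1 + ∑ i ∈ Finset.range t0, g (i + 1 + 1) := Finset.sum_range_succ' _ _ |>.trans (by ring)
      rw [← h1, h2]
    have hcast : ∀ i ∈ Finset.range t0, ((g (i + 2)).toNat : ℤ) = g (i + 2) := by
      intro i hi
      exact Int.toNat_of_nonneg (hgnn (i + 1) (by omega) (by simpa using Finset.mem_range.mp hi))
    have : (L.length : ℤ) = (l : ℤ) := by
      rw [hlen]
      push_cast
      rw [Int.toNat_of_nonneg hg1nn, Finset.sum_add_distrib, Finset.sum_congr rfl hcast]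
      simp only [Finset.sum_const, Finset.card_range, nsmul_eq_mul, mul_one]
      rw [hsum] at hglast
      linarith [hshift, hglast]
    exact_mod_cast this
  · intro x hx
    have h := hmem x hx
    exact ⟨h.1, le_trans h.2.1 (le_max_left _ _)⟩
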